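/- Let V be a finite linearly ordered type, G : SimpleGraph V a connected simple graph, and r : V a distinguished root (the requesting node). Define the operator F on subsets of V × V by: (x, y) ∈ F T iff either (G.Adj x y ∧ x = r), or (G.Adj x y, and no x' satisfies (x', y) ∈ T, and there exists w with (w, x) ∈ T and w ≠ y, and for all w' x', ((w', x') ∈ T ∧ G.Adj x' y) → x ≤ x'). Let ST be the inflationary fixpoint of F (the eventual value of I 0 = ∅, I (i+1) = I i ∪ F (I i)). Then: (1) every (x, y) ∈ ST satisfies G.Adj x y; (2) no x satisfies (x, r) ∈ ST; (3) for every y ≠ r there is exactly one x with (x, y) ∈ ST; and (4) the simple graph T on V with adjacency T.Adj a b ↔ ((a, b) ∈ ST ∨ (b, a) ∈ ST) is a spanning tree of G, i.e. T is connected and acyclic and every edge of T is an edge of G. -/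

import Mathlib

open SimpleGraph

theorem spanning_tree_fixpoint {V : Type*} [Fintype V] [LinearOrder V]
    (G : SimpleGraph V) (hG : G.Connected) (r : V)
    (F : Set (V × V) → Set (V × V))
    (hF : ∀ (T : Set (V × V)) (x y : V),
      (x, y) ∈ F T ↔
        (G.Adj x y ∧ x = r) ∨
        (G.Adj x y ∧ (∀ x' : V, (x', y) ∉ T) ∧
          (∃ w : V, (w, x) ∈ T ∧ w ≠ y) ∧
          (∀ w' x' : V, ((w', x') ∈ T ∧ G.Adj x' y) → x ≤ x')))
    (I : ℕ → Set (V × V)) (hI0 : I 0 = ∅)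
    (hIs : ∀ i, I (i + 1) = I i ∪ F (I i))
    (ST : Set (V × V)) (hST : ∃ N : ℕ, ∀ j : ℕ, I (N + j) = ST)
    (T : SimpleGraph V)
    (hT : ∀ a b : V, T.Adj a b ↔ ((a, b) ∈ ST ∨ (b, a) ∈ ST)) :
    (∀ x y : V, (x, y) ∈ ST → G.Adj x y) ∧
    (∀ x : V, (x, r) ∉ ST) ∧
    (∀ y : V, y ≠ r → ∃! x : V, (x, y) ∈ ST) ∧
    (T.Connected ∧ T.IsAcyclic ∧ T ≤ G) := by
  classical
  obtain ⟨N, hN⟩ := hST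
  have step : ∀ i, I i ⊆ I (i + 1) := by
    intro i
    rw [hIs i]
    exact Set.subset_union_left
  have mono : ∀ {i j : ℕ}, i ≤ j → I i ⊆ I j := by
    intro i j hij
    induction hij with
    | refl => exact subset_rfl
    | step h ih => exact ih.trans (step _)
  have hSTN : I N = ST := hN 0
  have hsub : ∀ i, I i ⊆ ST := by
    intro i e he
    have := mono (Nat.le_add_left i N) he
    rwa [hN i] at this
  have hSTmem : ∀ {x y : V}, (x, y) ∈ ST → (x, y) ∈ I N := by
    intro x y h
    rwa [hSTN]
  have hclosed : F ST ⊆ ST := by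
    intro e he
    have h1 : I (N + 1) = ST := hN 1
    have h2 : e ∈ I (N + 1) := by
      rw [hIs N, hSTN]
      exact Or.inr he
    rwa [h1] at h2
  -- adjacency
  have adjI : ∀ i x y, (x, y) ∈ I i → G.Adj x y := by
    intro i
    induction i with
    | zero => intro x y h; rw [hI0] at h; exact h.elim
    | succ k ih =>
      intro x y h
      rw [hIs k] at h
      rcases h with h | h
      · exact ih x y h
      · rcases (hF (I k) x y).1 h with ⟨h, _⟩ | ⟨h, _⟩ <;> exact h
  have adjST : ∀ x y : V, (x, y) ∈ ST → G.Adj x y := fun x y h => adjI N x y (hSTmem h)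
  -- root children
  have rootchild : ∀ i, 1 ≤ i → ∀ y, G.Adj r y → (r, y) ∈ I i := by
    intro i hi y hy
    have h0 : (r, y) ∈ F (I 0) := (hF (I 0) r y).2 (Or.inl ⟨hy, rfl⟩)
    have h1 : (r, y) ∈ I 1 := by
      rw [hIs 0]
      exact Or.inr h0
    exact mono hi h1
  -- unique parent per stage
  have uniq : ∀ i x1 x2 y, (x1, y) ∈ I i → (x2, y) ∈ I i → x1 = x2 := by
    intro i
    induction i with
    | zero => intro x1 x2 y h; rw [hI0] at h; exact h.elim
    | succ k ih =>
      intro x1 x2 y h1 h2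
      rw [hIs k] at h1 h2
      have hFI : ∀ a b, (a, y) ∈ I k → (b, y) ∈ F (I k) → a = b := by
        intro a b hA hB
        rcases (hF _ b y).1 hB with ⟨hb, hbr⟩ | ⟨_, hnp, _, _⟩
        · rw [hbr]
          rw [hbr] at hb
          rcases Nat.eq_zero_or_pos k with hk | hk
          · rw [hk, hI0] at hA; exact hA.elim
          · exact ih a r y hA (rootchild k hk y hb)
        · exact absurd hA (hnp a)
      rcases h1 with h1 | h1 <;> rcases h2 with h2 | h2
      · exact ih _ _ _ h1 h2
      · exact hFI _ _ h1 h2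
      · exact (hFI _ _ h2 h1).symm
      · rcases (hF _ x1 y).1 h1 with ⟨ha1, h1r⟩ | ⟨ha1, hnp1, ⟨w1, hw1, hw1y⟩, hmin1⟩ <;>
          rcases (hF _ x2 y).1 h2 with ⟨ha2, h2r⟩ | ⟨ha2, hnp2, ⟨w2, hw2, hw2y⟩, hmin2⟩
        · rw [h1r, h2r]
        · rw [h1r] at ha1 ⊢
          rcases Nat.eq_zero_or_pos k with hk | hk
          · rw [hk, hI0] at hw2; exact hw2.elim
          · exact absurd (rootchild k hk y ha1) (hnp2 r)
        · rw [h2r] at ha2 ⊢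
          rcases Nat.eq_zero_or_pos k with hk | hk
          · rw [hk, hI0] at hw1; exact hw1.elim
          · exact absurd (rootchild k hk y ha2) (hnp1 r)
        · exact le_antisymm (hmin1 w2 x2 ⟨hw2, ha2⟩) (hmin2 w1 x1 ⟨hw1, ha1⟩)
  have uniqST : ∀ x1 x2 y, (x1, y) ∈ ST → (x2, y) ∈ ST → x1 = x2 := fun x1 x2 y h1 h2 =>
    uniq N x1 x2 y (hSTmem h1) (hSTmem h2)
  -- no parent of the root
  have norootI : ∀ i x, (x, r) ∉ I i := by
    intro i
    induction i with
    | zero => intro x h; rw [hI0] at h; exact h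
    | succ k ih =>
      intro x h
      rw [hIs k] at h
      rcases h with h | h
      · exact ih x h
      · rcases (hF _ x r).1 h with ⟨ha, hxr⟩ | ⟨ha, _, ⟨w, hw, hwr⟩, _⟩
        · rw [hxr] at ha; exact G.loopless.irrefl r ha
        · rcases Nat.eq_zero_or_pos k with hk | hk
          · rw [hk, hI0] at hw; exact hw
          · exact hwr (uniq k w r x hw (rootchild k hk x ha.symm))
  have norootST : ∀ x : V, (x, r) ∉ ST := fun x h => norootI N x (hSTmem h)
  -- parent-of-parent invariant
  have hasParent : ∀ i a b, (a, b) ∈ I i → a = r ∨ ∃ c, (c, a) ∈ I i := by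
    intro i
    induction i with
    | zero => intro a b h; rw [hI0] at h; exact h.elim
    | succ k ih =>
      intro a b h
      rw [hIs k] at h
      rcases h with h | h
      · rcases ih a b h with h' | ⟨c, hc⟩
        · exact Or.inl h'
        · exact Or.inr ⟨c, mono (Nat.le_succ k) hc⟩
      · rcases (hF _ a b).1 h with ⟨_, rfl⟩ | ⟨_, _, ⟨w, hw, _⟩, _⟩
        · exact Or.inl rfl
        · exact Or.inr ⟨w, mono (Nat.le_succ k) hw⟩
  have hasParentST : ∀ a b, (a, b) ∈ ST → a = r ∨ ∃ c, (c, a) ∈ ST := by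
    intro a b h
    rcases hasParent N a b (hSTmem h) with h' | ⟨c, hc⟩
    · exact Or.inl h'
    · exact Or.inr ⟨c, hsub N hc⟩
  -- every neighbor of a tree node is a tree node
  have stepTree : ∀ u v : V, (u = r ∨ ∃ x, (x, u) ∈ ST) → G.Adj u v →
      (v = r ∨ ∃ x, (x, v) ∈ ST) := by
    intro u v hu huv
    by_cases hvr : v = r
    · exact Or.inl hvr
    right
    by_contra hnp'
    push_neg at hnp'
    by_cases hrv : G.Adj r v
    · exact hnp' r (hclosed ((hF ST r v).2 (Or.inl ⟨hrv, rfl⟩)))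
    have hur : u ≠ r := fun h => hrv (h ▸ huv)
    obtain ⟨pu, hpu⟩ : ∃ x, (x, u) ∈ ST := hu.resolve_left hur
    set A : Finset V := Finset.univ.filter (fun x' => (∃ w', (w', x') ∈ ST) ∧ G.Adj x' v)
      with hA
    have hUA : u ∈ A := by
      rw [hA, Finset.mem_filter]
      exact ⟨Finset.mem_univ u, ⟨pu, hpu⟩, huv⟩
    obtain ⟨m, hmA, hmmin⟩ := Finset.exists_min_image A id ⟨u, hUA⟩
    obtain ⟨⟨w, hwm⟩, hmv⟩ := (Finset.mem_filter.1 hmA).2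
    have hwv : w ≠ v := by
      intro h
      subst h
      rcases hasParentST w m hwm with h' | ⟨c, hc⟩
      · exact hvr h'
      · exact hnp' c hc
    have hmin : ∀ w' x' : V, ((w', x') ∈ ST ∧ G.Adj x' v) → m ≤ x' := by
      intro w' x' ⟨hw', hx'⟩
      have hx'A : x' ∈ A := by
        rw [hA, Finset.mem_filter]
        exact ⟨Finset.mem_univ x', ⟨w', hw'⟩, hx'⟩
      exact hmmin x' hx'A
    exact hnp' m (hclosed ((hF ST m v).2 (Or.inr ⟨hmv, hnp', ⟨w, hwm, hwv⟩, hmin⟩)))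
  have allTree : ∀ v : V, v = r ∨ ∃ x, (x, v) ∈ ST := by
    have key : ∀ (a b : V) (_ : G.Walk a b), (a = r ∨ ∃ x, (x, a) ∈ ST) →
        (b = r ∨ ∃ x, (x, b) ∈ ST) := by
      intro a b p
      induction p with
      | nil => exact id
      | cons h p ih => exact fun ha => ih (stepTree _ _ ha h)
    intro v
    obtain ⟨p⟩ := hG.preconnected r v
    exact key r v p (Or.inl rfl)
  have part3 : ∀ y : V, y ≠ r → ∃! x : V, (x, y) ∈ ST := by
    intro y hy
    obtain ⟨x, hx⟩ := (allTree y).resolve_left hy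
    exact ⟨x, hx, fun x' hx' => uniqST x' x y hx' hx⟩
  -- depth function
  let dep : V → ℕ := fun v => sInf {i | ∃ x, (x, v) ∈ I i}
  have hsr : dep r = 0 := by
    have hempty : {i | ∃ x, (x, r) ∈ I i} = ∅ := by
      ext i
      simp only [Set.mem_setOf_eq, Set.mem_empty_iff_false, iff_false, not_exists]
      exact fun x => norootI i x
    calc dep r = sInf {i | ∃ x, (x, r) ∈ I i} := rfl
      _ = 0 := by rw [hempty]; exact Nat.sInf_empty
  have hslt : ∀ x y, (x, y) ∈ ST → dep x < dep y := by
    intro x y hxy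
    have hyne : {i | ∃ x', (x', y) ∈ I i}.Nonempty := ⟨N, x, hSTmem hxy⟩
    have hmem : dep y ∈ {i | ∃ x', (x', y) ∈ I i} := Nat.sInf_mem hyne
    obtain ⟨x', hx'⟩ := hmem
    have hx'x : x' = x := uniqST x' x y (hsub _ hx') hxy
    subst hx'x
    have hpos : dep y ≠ 0 := by
      intro h0
      rw [h0, hI0] at hx'
      exact hx'
    obtain ⟨k, hk⟩ : ∃ k, dep y = k + 1 := ⟨dep y - 1, by omega⟩
    rw [hk, hIs k] at hx'
    rcases hx' with hx' | hx'
    · have hle : dep y ≤ k := Nat.sInf_le ⟨x', hx'⟩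
      omega
    · rcases (hF _ x' y).1 hx' with ⟨_, hx'r⟩ | ⟨_, _, ⟨w, hw, _⟩, _⟩
      · rw [hx'r, hsr]; omega
      · have hle : dep x' ≤ k := Nat.sInf_le ⟨w, hw⟩
        omega
  -- T ≤ G
  have hTG : T ≤ G := by
    intro a b hab
    rcases (hT a b).1 hab with h | h
    · exact adjST a b h
    · exact (adjST b a h).symm
  -- connectivity
  have key : ∀ (n : ℕ) (v : V), dep v ≤ n → T.Reachable r v := by
    intro n
    induction n with
    | zero =>
      intro v hv
      by_cases hvr : v = r
      · rw [hvr]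
      · obtain ⟨x, hx⟩ := (allTree v).resolve_left hvr
        have := hslt x v hx
        omega
    | succ n ih =>
      intro v hv
      by_cases hvr : v = r
      · rw [hvr]
      · obtain ⟨x, hx⟩ := (allTree v).resolve_left hvr
        have h1 := hslt x v hx
        have hrx := ih x (by omega)
        exact hrx.trans ((hT x v).2 (Or.inl hx)).reachable
  have reach : ∀ v : V, T.Reachable r v := fun v => key (dep v) v le_rfl
  have hTconn : T.Connected := by
    rw [connected_iff]
    exact ⟨fun u v => (reach u).symm.trans (reach v), hG.nonempty⟩
  -- acyclicity
  have hacyclic : T.IsAcyclic := by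
    intro v p hp
    have hne : p.support.toFinset.Nonempty := ⟨v, List.mem_toFinset.2 p.start_mem_support⟩
    obtain ⟨m, hmF, hmax'⟩ := Finset.exists_max_image p.support.toFinset dep hne
    have hm : m ∈ p.support := List.mem_toFinset.1 hmF
    have hmax : ∀ u ∈ p.support, dep u ≤ dep m := fun u hu =>
      hmax' u (List.mem_toFinset.2 hu)
    have hq : (p.rotate m hm).IsCycle := hp.rotate hm
    have hmemq : ∀ u ∈ (p.rotate m hm).support, dep u ≤ dep m := by
      intro u hu
      rw [Walk.support_eq_cons] at hu
      rcases List.mem_cons.1 hu with rfl | hu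
      · exact le_rfl
      · exact hmax u (List.mem_of_mem_tail ((Walk.support_rotate p m hm).mem_iff.1 hu))
    generalize p.rotate m hm = q at hq hmemq
    cases q with
    | nil => exact hq.ne_nil rfl
    | @cons _ b _ h₁ q' =>
      obtain ⟨c, q₂, h₂, hcc⟩ := Walk.exists_cons_eq_concat h₁ q'
      rw [hcc] at hq hmemq
      cases q₂ with
      | nil => exact T.loopless.irrefl m h₂
      | @cons _ b' _ h₁' q₃ =>
        have hbmem : b' ∈ ((Walk.cons h₁' q₃).concat h₂).support := by
          rw [Walk.support_concat, Walk.support_cons]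
          simp only [List.mem_append, List.mem_cons]
          exact Or.inl (Or.inr q₃.start_mem_support)
        have hcmem : c ∈ ((Walk.cons h₁' q₃).concat h₂).support := by
          rw [Walk.support_concat, Walk.support_cons]
          simp only [List.mem_append, List.mem_cons]
          exact Or.inl (Or.inr q₃.end_mem_support)
        have hsb : dep b' ≤ dep m := hmemq b' hbmem
        have hsc : dep c ≤ dep m := hmemq c hcmem
        have hb : (b', m) ∈ ST := by
          rcases (hT m b').1 h₁' with h | h
          · exact absurd (hslt m b' h) (by omega)
          · exact h
        have hc2 : (c, m) ∈ ST := by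
          rcases (hT c m).1 h₂ with h | h
          · exact h
          · exact absurd (hslt m c h) (by omega)
        have hbc : b' = c := uniqST b' c m hb hc2
        subst hbc
        have hnd := hq.edges_nodup
        rw [Walk.edges_concat, Walk.edges_cons, List.concat_eq_append] at hnd
        rw [List.cons_append] at hnd
        have hmem2 : s(m, b') ∈ q₃.edges ++ [s(b', m)] := by
          apply List.mem_append_right
          simp [Sym2.eq_swap]
        exact (List.nodup_cons.1 hnd).1 hmem2
  exact ⟨adjST, norootST, part3, hTconn, hacyclic, hTG⟩
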